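/- Let F be an algebraically closed field of characteristic zero and (V, q) a non-degenerate quadratic F-space with dim_F V ≥ 4. Let N ∈ End_F(V) be skew-adjoint for q (i.e. b_q(Nx, y) + b_q(x, Ny) = 0 for all x, y), nilpotent, with rank N = 2 and rank N^2 = 1. Then there exist vectors e_1, e_2, e'_1, e'_2 ∈ V with b_q(e_i, e_j) = 0, b_q(e'_i, e'_j) = 0, and b_q(e_i, e'_j) = δ_{ij} for i, j ∈ {1, 2}, such that N e_1 = e_2 + e'_2, N e_2 = −e'_1, N e'_2 = −e'_1, N e'_1 = 0, and N x = 0 for every x in the orthogonal complement (with respect to b_q) of the span of {e_1, e_2, e'_1, e'_2}. -/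

import Mathlib

private lemma aux_range_pow_stable {F V : Type*} [Field F] [AddCommGroup V] [Module F V]
    (N : Module.End F V)
    (h : LinearMap.range (N ^ 3) = LinearMap.range (N ^ 2)) :
    ∀ m, LinearMap.range (N ^ (2 + m)) = LinearMap.range (N ^ 2) := by
  intro m
  induction m with
  | zero => rfl
  | succ m ih =>
    have h1 : N ^ (2 + (m + 1)) = N ∘ₗ N ^ (2 + m) := by
      rw [← Module.End.mul_eq_comp, ← pow_succ']
      rfl
    have h2 : (N ^ 3 : Module.End F V) = N ∘ₗ N ^ 2 := by
      rw [← Module.End.mul_eq_comp, ← pow_succ']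
    rw [h1, LinearMap.range_comp, ih, ← LinearMap.range_comp, ← h2, h]

private lemma aux_cube_zero {F V : Type*} [Field F] [AddCommGroup V] [Module F V]
    [FiniteDimensional F V] (N : Module.End F V) (hnil : IsNilpotent N)
    (hrk2 : Module.finrank F (LinearMap.range (N ^ 2)) = 1) : N ^ 3 = 0 := by
  by_contra h3
  have hle : LinearMap.range (N ^ 3) ≤ LinearMap.range (N ^ 2) := by
    rintro _ ⟨x, rfl⟩
    exact ⟨N x, by rw [← Module.End.mul_apply, ← pow_succ]⟩
  have hne : LinearMap.range (N ^ 3) ≠ ⊥ := fun hbot => h3 (LinearMap.range_eq_bot.mp hbot)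
  have hfr1 : Module.finrank F (LinearMap.range (N ^ 3)) ≠ 0 :=
    fun h0 => hne (Submodule.finrank_eq_zero.mp h0)
  have hfr2 : Module.finrank F (LinearMap.range (N ^ 3)) ≤ 1 := by
    rw [← hrk2]; exact Submodule.finrank_mono hle
  have heq : LinearMap.range (N ^ 3) = LinearMap.range (N ^ 2) :=
    Submodule.eq_of_le_of_finrank_le hle (by omega)
  obtain ⟨k, hk⟩ := hnil
  have hzero : N ^ (2 + k) = 0 := by rw [pow_add, hk, mul_zero]
  have := aux_range_pow_stable N heq k
  rw [hzero, LinearMap.range_zero] at this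
  rw [← this] at hrk2
  simp at hrk2

/-- normal form of a skew-adjoint nilpotent operator with rank N = 2 and
rank N² = 1 on a non-degenerate quadratic space of dimension ≥ 4 over an algebraically
closed field of characteristic zero (the quadratic space is encoded by its associated
non-degenerate symmetric bilinear form `B`). -/
theorem stmt7 {F V : Type*} [Field F] [IsAlgClosed F] [CharZero F]
    [AddCommGroup V] [Module F V] [FiniteDimensional F V]
    (B : LinearMap.BilinForm F V) (hsymm : ∀ x y : V, B x y = B y x)
    (hB : B.Nondegenerate)
    (hdim : 4 ≤ Module.finrank F V)
    (N : Module.End F V)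
    (hskew : ∀ x y : V, B (N x) y + B x (N y) = 0)
    (hnil : IsNilpotent N)
    (hrk : Module.finrank F (LinearMap.range N) = 2)
    (hrk2 : Module.finrank F (LinearMap.range (N ^ 2)) = 1) :
    ∃ e₁ e₂ e₁' e₂' : V,
      (B e₁ e₁ = 0 ∧ B e₁ e₂ = 0 ∧ B e₂ e₁ = 0 ∧ B e₂ e₂ = 0) ∧
      (B e₁' e₁' = 0 ∧ B e₁' e₂' = 0 ∧ B e₂' e₁' = 0 ∧ B e₂' e₂' = 0) ∧
      (B e₁ e₁' = 1 ∧ B e₁ e₂' = 0 ∧ B e₂ e₁' = 0 ∧ B e₂ e₂' = 1) ∧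
      N e₁ = e₂ + e₂' ∧ N e₂ = -e₁' ∧ N e₂' = -e₁' ∧ N e₁' = 0 ∧
      ∀ x : V, B e₁ x = 0 → B e₂ x = 0 → B e₁' x = 0 → B e₂' x = 0 → N x = 0 := by
  classical
  have hsk : ∀ x y : V, B (N x) y = - B x (N y) := by
    intro x y; linear_combination hskew x y
  have hxNx : ∀ x : V, B x (N x) = 0 := by
    intro x
    have h1 := hskew x x
    have h2 := hsymm (N x) x
    have h2' : (2 : F) * B x (N x) = 0 := by linear_combination h1 - h2
    have := mul_eq_zero.mp h2'
    rcases this with h | h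
    · exact absurd h two_ne_zero
    · exact h
  have hcube := aux_cube_zero N hnil hrk2
  have hp2 : ∀ x : V, (N ^ 2) x = N (N x) := by
    intro x; simp [pow_succ, Module.End.mul_apply]
  have h3' : ∀ x : V, N (N (N x)) = 0 := by
    intro x
    have : (N ^ 3) x = 0 := by rw [hcube]; rfl
    simpa [pow_succ, Module.End.mul_apply] using this
  -- find v with N² v ≠ 0
  obtain ⟨v, hv2⟩ : ∃ v : V, N (N v) ≠ 0 := by
    by_contra hcon
    push_neg at hcon
    have : N ^ 2 = 0 := by ext x; simpa [hp2] using hcon x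
    rw [this, LinearMap.range_zero] at hrk2
    simp at hrk2
  -- c := B (N (N v)) v is nonzero
  have hcne : B (N (N v)) v ≠ 0 := by
    intro hc0
    have hker : ∀ y : V, (N ^ 2) y = 0 → B (N (N v)) y = 0 := by
      intro y hy
      have hy' : N (N y) = 0 := by rw [← hp2]; exact hy
      have e1 := hsk (N v) y
      have e2 : B (N v) (N y) = 0 := by rw [hsk v (N y), hy']; simp
      rw [e1, e2, neg_zero]
    have hvker : v ∉ LinearMap.ker (N ^ 2) := by
      rw [LinearMap.mem_ker, hp2]; exact hv2
    have hsup : LinearMap.ker (N ^ 2) ⊔ Submodule.span F {v} = ⊤ := by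
      have hlt : LinearMap.ker (N ^ 2) < LinearMap.ker (N ^ 2) ⊔ Submodule.span F {v} := by
        refine lt_of_le_of_ne le_sup_left (fun h => hvker ?_)
        rw [h]
        exact Submodule.mem_sup_right (Submodule.mem_span_singleton_self v)
      have h1 := Submodule.finrank_lt_finrank_of_lt hlt
      have h2 := LinearMap.finrank_range_add_finrank_ker (N ^ 2 : Module.End F V)
      have h3 := Submodule.finrank_le (LinearMap.ker (N ^ 2) ⊔ Submodule.span F {v})
      apply Submodule.eq_top_of_finrank_eq
      omega
    apply hv2
    apply hB.1
    intro y
    have hy : y ∈ LinearMap.ker (N ^ 2) ⊔ Submodule.span F {v} := by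
      rw [hsup]; exact Submodule.mem_top
    obtain ⟨k, hk, z, hz, rfl⟩ := Submodule.mem_sup.mp hy
    obtain ⟨a, rfl⟩ := Submodule.mem_span_singleton.mp hz
    rw [map_add, map_smul, hker k hk, smul_eq_mul, hc0]
    ring
  -- adjust v to be isotropic
  obtain ⟨t, ht⟩ : ∃ t : F, B v v + 2 * t * B (N (N v)) v = 0 :=
    ⟨-(B v v) / (2 * B (N (N v)) v), by field_simp; ring⟩
  have Brr0 : B (N (N v)) (N (N v)) = 0 := by
    rw [hsk (N v) (N (N v)), h3' v]
    simp
  set v₀ := v + t • (N (N v)) with hv₀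
  have hNv₀ : N v₀ = N v := by
    rw [hv₀, map_add, map_smul, h3' v, smul_zero, add_zero]
  have Bv₀v₀ : B v₀ v₀ = 0 := by
    rw [hv₀]
    simp only [map_add, map_smul, LinearMap.add_apply, LinearMap.smul_apply, smul_eq_mul]
    linear_combination ht + t * hsymm v (N (N v)) + (t * t) * Brr0
  have hc' : B (N (N v)) v₀ = B (N (N v)) v := by
    rw [hv₀]
    simp only [map_add, map_smul, smul_eq_mul]
    linear_combination t * Brr0
  -- square root scaling
  obtain ⟨l, hl⟩ := IsAlgClosed.exists_pow_nat_eq (k := F) (-2 / B (N (N v)) v) (n := 2) two_pos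
  have hl2 : l ^ 2 * B (N (N v)) v = -2 := by
    rw [hl]; field_simp
  set p := l • v₀ with hp
  set q := N p with hq
  set r := N q with hr
  have hqval : q = l • N v := by rw [hq, hp, map_smul, hNv₀]
  have hrval : r = l • N (N v) := by rw [hr, hqval, map_smul]
  have hNr : N r = 0 := by rw [hrval, map_smul, h3' v, smul_zero]
  -- Gram matrix entries
  have Gpp : B p p = 0 := by
    rw [hp]; simp only [map_smul, LinearMap.smul_apply, smul_eq_mul]
    rw [Bv₀v₀]; ring
  have Gpq : B p q = 0 := by rw [hq]; exact hxNx p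
  have Gqp : B q p = 0 := by rw [hsymm]; exact Gpq
  have Gpr : B p r = -2 := by
    rw [hp, hrval]
    simp only [map_smul, LinearMap.smul_apply, smul_eq_mul]
    rw [hsymm v₀ (N (N v)), hc']
    linear_combination hl2
  have Grp : B r p = -2 := by rw [hsymm]; exact Gpr
  have Gqq : B q q = 2 := by
    have h1 := hsk p q
    rw [← hq] at h1
    rw [h1, ← hr, Gpr]; ring
  have Gqr : B q r = 0 := by
    have h1 := hsk p r
    rw [← hq] at h1
    rw [h1, hNr]; simp
  have Grq : B r q = 0 := by rw [hsymm]; exact Gqr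
  have Grr : B r r = 0 := by
    have h1 := hsk q r
    rw [← hr] at h1
    rw [h1, hNr]; simp
  clear_value p q r
  -- range N = span {q, r}
  have hrange : LinearMap.range N = Submodule.span F ({q, r} : Set V) := by
    have hli : LinearIndependent F ![q, r] := by
      rw [LinearIndependent.pair_iff]
      intro s u hsu
      have e1 : B (s • q + u • r) q = 0 := by rw [hsu]; simp
      have e2 : B (s • q + u • r) p = 0 := by rw [hsu]; simp
      simp only [map_add, map_smul, LinearMap.add_apply, LinearMap.smul_apply,
        smul_eq_mul, Gqq, Grq, Gqp, Grp] at e1 e2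
      constructor
      · have : (2 : F) * s = 0 := by linear_combination e1
        rcases mul_eq_zero.mp this with h | h
        · exact absurd h two_ne_zero
        · exact h
      · linear_combination (-1/2 : F) * e2
    have hle : Submodule.span F ({q, r} : Set V) ≤ LinearMap.range N := by
      rw [Submodule.span_le]
      rintro z (rfl | rfl)
      · exact ⟨p, hq.symm⟩
      · exact ⟨q, hr.symm⟩
    have hcard : Module.finrank F (Submodule.span F ({q, r} : Set V)) = 2 := by
      have hrg : Set.range ![q, r] = ({q, r} : Set V) := by
        ext z
        simp only [Set.mem_range, Fin.exists_fin_two, Matrix.cons_val_zero, Matrix.cons_val_one,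
          Matrix.head_cons, Set.mem_insert_iff, Set.mem_singleton_iff, eq_comm]
      have := finrank_span_eq_card hli
      rw [hrg] at this
      simpa using this
    exact (Submodule.eq_of_le_of_finrank_le hle (by rw [hrk, hcard])).symm
  have kerlem : ∀ x : V, B x q = 0 → B x r = 0 → N x = 0 := by
    intro x hxq hxr
    have hmem : N x ∈ Submodule.span F ({q, r} : Set V) := by
      rw [← hrange]; exact LinearMap.mem_range_self N x
    obtain ⟨a, b, hab⟩ := Submodule.mem_span_pair.mp hmem
    have h1 : B (N x) p = 0 := by rw [hsk x p, ← hq, hxq, neg_zero]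
    have h2 : B (N x) q = 0 := by rw [hsk x q, ← hr, hxr, neg_zero]
    rw [← hab] at h1 h2
    simp only [map_add, map_smul, LinearMap.add_apply, LinearMap.smul_apply,
      smul_eq_mul, Gqp, Grp, Gqq, Grq] at h1 h2
    have hb0 : b = 0 := by linear_combination (-1/2 : F) * h1
    have ha0 : a = 0 := by
      have : (2 : F) * a = 0 := by linear_combination h2
      rcases mul_eq_zero.mp this with h | h
      · exact absurd h two_ne_zero
      · exact h
    rw [← hab, ha0, hb0]; simp
  -- the orthogonal projection onto span {p, q, r}
  set π : V → V := fun y => (-(B y r) / 2) • p + (B y q / 2) • q + (-(B y p) / 2) • r with hπ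
  have hproj : ∀ y : V, B (y - π y) p = 0 ∧ B (y - π y) q = 0 ∧ B (y - π y) r = 0 := by
    intro y
    refine ⟨?_, ?_, ?_⟩ <;>
    · rw [hπ]
      simp only [map_sub, map_add, map_smul, LinearMap.sub_apply, LinearMap.add_apply,
        LinearMap.smul_apply, smul_eq_mul, Gpp, Gpq, Gqp, Gpr, Grp, Gqq, Gqr, Grq, Grr]
      ring
  -- existence of a vector outside span {p, q, r}
  have hex : ∃ y : V, y - π y ≠ 0 := by
    by_contra hcon
    push_neg at hcon
    set φ : V →ₗ[F] (Fin 3 → F) := LinearMap.pi ![B.flip p, B.flip q, B.flip r] with hφ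
    have hinj : Function.Injective φ := by
      rw [← LinearMap.ker_eq_bot]
      rw [Submodule.eq_bot_iff]
      intro y hy
      rw [LinearMap.mem_ker] at hy
      have h0 : B y p = 0 := congrFun hy 0
      have h1 : B y q = 0 := congrFun hy 1
      have h2 : B y r = 0 := congrFun hy 2
      have := hcon y
      rw [sub_eq_zero] at this
      rw [this, hπ]
      simp [h0, h1, h2]
    have hle3 := LinearMap.finrank_le_finrank_of_injective hinj
    rw [Module.finrank_pi] at hle3
    simp at hle3
    omega
  -- existence of an anisotropic vector orthogonal to p, q, r
  have hw : ∃ w : V, (B w p = 0 ∧ B w q = 0 ∧ B w r = 0) ∧ B w w ≠ 0 := by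
    by_contra hcon
    push_neg at hcon
    have hiso : ∀ w : V, B w p = 0 → B w q = 0 → B w r = 0 → B w w = 0 := by
      intro w h1 h2 h3; exact hcon w ⟨h1, h2, h3⟩
    have hpair : ∀ z z' : V, (B z p = 0 ∧ B z q = 0 ∧ B z r = 0) →
        (B z' p = 0 ∧ B z' q = 0 ∧ B z' r = 0) → B z z' = 0 := by
      intro z z' hz hz'
      have h1 := hiso z hz.1 hz.2.1 hz.2.2
      have h2 := hiso z' hz'.1 hz'.2.1 hz'.2.2
      have h3 : B (z + z') (z + z') = 0 := by
        apply hiso <;>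
        · simp only [map_add, LinearMap.add_apply]
          first
          | rw [hz.1, hz'.1]; ring
          | rw [hz.2.1, hz'.2.1]; ring
          | rw [hz.2.2, hz'.2.2]; ring
      have hexp : B (z + z') (z + z') = B z z + B z z' + B z' z + B z' z' := by
        simp only [map_add, LinearMap.add_apply]; ring
      have hs := hsymm z z'
      have h4 : (2 : F) * B z z' = 0 := by
        rw [hexp] at h3; linear_combination h3 - h1 - h2 + hs
      rcases mul_eq_zero.mp h4 with h | h
      · exact absurd h two_ne_zero
      · exact h
    obtain ⟨y₀, hy₀⟩ := hex
    have hQu := hproj y₀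
    apply hy₀
    apply hB.1
    intro y
    have hdec : y = π y + (y - π y) := by abel
    rw [hdec, map_add]
    have hA : B (y₀ - π y₀) (π y) = 0 := by
      rw [hπ]
      simp only [map_add, map_smul, smul_eq_mul]
      rw [hQu.1, hQu.2.1, hQu.2.2]
      ring
    have hBb : B (y₀ - π y₀) (y - π y) = 0 := hpair _ _ hQu (hproj y)
    rw [hA, hBb]; ring
  obtain ⟨w₀, hQw₀, hw₀ne⟩ := hw
  obtain ⟨m, hm⟩ := IsAlgClosed.exists_pow_nat_eq (k := F) (-(1/2) / B w₀ w₀) (n := 2) two_pos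
  have hm2 : m ^ 2 * B w₀ w₀ = -(1/2) := by
    rw [hm]; field_simp
  obtain ⟨w, Bww, Bwp, Bwq, Bwr⟩ :
      ∃ w : V, B w w = -(1/2) ∧ B w p = 0 ∧ B w q = 0 ∧ B w r = 0 := by
    refine ⟨m • w₀, ?_, ?_, ?_, ?_⟩
    · simp only [map_smul, LinearMap.smul_apply, smul_eq_mul]
      linear_combination hm2
    · simp only [map_smul, LinearMap.smul_apply, hQw₀.1, smul_zero]
    · simp only [map_smul, LinearMap.smul_apply, hQw₀.2.1, smul_zero]
    · simp only [map_smul, LinearMap.smul_apply, hQw₀.2.2, smul_zero]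
  have Bpw : B p w = 0 := by rw [hsymm]; exact Bwp
  have Bqw : B q w = 0 := by rw [hsymm]; exact Bwq
  have Brw : B r w = 0 := by rw [hsymm]; exact Bwr
  have hNw : N w = 0 := kerlem w Bwq Bwr
  -- the normal-form basis
  refine ⟨p, (1/2 : F) • q + w, -((1/2 : F) • r), (1/2 : F) • q - w,
    ⟨Gpp, ?_, ?_, ?_⟩, ⟨?_, ?_, ?_, ?_⟩, ⟨?_, ?_, ?_, ?_⟩, ?_, ?_, ?_, ?_, ?_⟩
  · -- B e₁ e₂ = 0
    simp only [map_add, map_smul, LinearMap.add_apply, LinearMap.smul_apply, smul_eq_mul,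
      Gpq, Bpw]
    ring
  · -- B e₂ e₁ = 0
    simp only [map_add, map_smul, LinearMap.add_apply, LinearMap.smul_apply, smul_eq_mul,
      Gqp, Bwp]
    ring
  · -- B e₂ e₂ = 0
    simp only [map_add, map_smul, LinearMap.add_apply, LinearMap.smul_apply, smul_eq_mul,
      Gqq, Bqw, Bwq, Bww]
    ring
  · -- B e₁' e₁' = 0
    simp only [map_neg, map_smul, LinearMap.neg_apply, LinearMap.smul_apply, smul_eq_mul, Grr]
    ring
  · -- B e₁' e₂' = 0
    simp only [map_neg, map_sub, map_smul, LinearMap.neg_apply, LinearMap.sub_apply,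
      LinearMap.smul_apply, smul_eq_mul, Grq, Brw]
    ring
  · -- B e₂' e₁' = 0
    simp only [map_neg, map_sub, map_smul, LinearMap.neg_apply, LinearMap.sub_apply,
      LinearMap.smul_apply, smul_eq_mul, Gqr, Bwr]
    ring
  · -- B e₂' e₂' = 0
    simp only [map_sub, map_smul, LinearMap.sub_apply, LinearMap.smul_apply, smul_eq_mul,
      Gqq, Bqw, Bwq, Bww]
    ring
  · -- B e₁ e₁' = 1
    simp only [map_neg, map_smul, LinearMap.neg_apply, LinearMap.smul_apply, smul_eq_mul, Gpr]
    ring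
  · -- B e₁ e₂' = 0
    simp only [map_sub, map_smul, LinearMap.sub_apply, LinearMap.smul_apply, smul_eq_mul,
      Gpq, Bpw]
    ring
  · -- B e₂ e₁' = 0
    simp only [map_neg, map_add, map_smul, LinearMap.neg_apply, LinearMap.add_apply,
      LinearMap.smul_apply, smul_eq_mul, Gqr, Bwr]
    ring
  · -- B e₂ e₂' = 1
    simp only [map_add, map_sub, map_smul, LinearMap.add_apply, LinearMap.sub_apply,
      LinearMap.smul_apply, smul_eq_mul, Gqq, Bqw, Bwq, Bww]
    ring
  · -- N e₁ = e₂ + e₂'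
    rw [← hq]
    module
  · -- N e₂ = -e₁'
    rw [map_add, map_smul, ← hr, hNw]
    module
  · -- N e₂' = -e₁'
    rw [map_sub, map_smul, ← hr, hNw]
    module
  · -- N e₁' = 0
    rw [map_neg, map_smul, hNr, smul_zero, neg_zero]
  · -- orthogonal complement is killed by N
    intro x h1 h2 h3 h4
    simp only [map_add, map_sub, map_neg, map_smul, LinearMap.add_apply, LinearMap.sub_apply,
      LinearMap.neg_apply, LinearMap.smul_apply, smul_eq_mul] at h2 h3 h4
    have hxq : B x q = 0 := by
      rw [hsymm]; linear_combination h2 + h4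
    have hxr : B x r = 0 := by
      rw [hsymm]; linear_combination (-2 : F) * h3
    exact kerlem x hxq hxr
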